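/- Let Λ be a nonzero Hermiticity-preserving linear map from d×d to d'×d' complex matrices which is trace-annihilating, i.e. tr Λ(X) = 0 for every X. Then there exist quantum channels Φ₁, Φ₂ from d×d to d'×d' matrices and a constant c > 0 such that cΛ = Φ₁ − Φ₂. -/

import Mathlib

open scoped ComplexOrder Kronecker
open Matrix

noncomputable section

/-- Square complex matrices of size `d`. -/
abbrev Mat (d : ℕ) : Type := Matrix (Fin d) (Fin d) ℂ

/-- Square complex matrices on the bipartite space `ℂ^dA ⊗ ℂ^dB`. -/
abbrev BMat (dA dB : ℕ) : Type := Matrix (Fin dA × Fin dB) (Fin dA × Fin dB) ℂ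

/-- A quantum state: a positive semidefinite matrix of unit trace. -/
def IsState {n : Type*} [Fintype n] (ρ : Matrix n n ℂ) : Prop :=
  ρ.PosSemidef ∧ ρ.trace = 1

/-- Trace norm `‖A‖₁ = tr √(Aᴴ A)`. -/
noncomputable def traceNorm {n : Type*} [Fintype n] [DecidableEq n] (A : Matrix n n ℂ) : ℝ :=
  (((Matrix.posSemidef_conjTranspose_mul_self A).1.eigenvectorUnitary : Matrix n n ℂ) *
    diagonal (((↑) : ℝ → ℂ) ∘ Real.sqrt ∘ (Matrix.posSemidef_conjTranspose_mul_self A).1.eigenvalues) *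
    (star (Matrix.posSemidef_conjTranspose_mul_self A).1.eigenvectorUnitary : Matrix n n ℂ)).trace.re

/-- Operator (spectral) norm of a square complex matrix. -/
noncomputable def opNorm {n : Type*} [Fintype n] [DecidableEq n] (A : Matrix n n ℂ) : ℝ :=
  ‖LinearMap.toContinuousLinearMap (Matrix.toEuclideanLin A)‖

/-- The partial action `id_{dA} ⊗ Λ` of a map `Λ` on block matrices. -/
def idTensor {dA dB dC : ℕ} (Λ : Mat dB → Mat dC) (ρ : BMat dA dB) : BMat dA dC :=
  fun p q => Λ (fun i j => ρ (p.1, i) (q.1, j)) p.2 q.2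

/-- `Λ` is `k`-positive: `id_k ⊗ Λ` preserves positive semidefiniteness. -/
def kPositive (k : ℕ) {dB dC : ℕ} (Λ : Mat dB → Mat dC) : Prop :=
  ∀ ρ : BMat k dB, ρ.PosSemidef → (idTensor Λ ρ).PosSemidef

/-- Completely positive: `k`-positive for every `k`. -/
def CompletelyPositive {dB dC : ℕ} (Λ : Mat dB → Mat dC) : Prop :=
  ∀ k : ℕ, kPositive k Λ

/-- Trace-preserving map. -/
def TracePreserving {dB dC : ℕ} (Λ : Mat dB → Mat dC) : Prop :=
  ∀ X : Mat dB, (Λ X).trace = X.trace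

/-- A quantum channel: completely positive and trace-preserving linear map. -/
def IsChannel {dB dC : ℕ} (Λ : Mat dB →ₗ[ℂ] Mat dC) : Prop :=
  CompletelyPositive (⇑Λ) ∧ TracePreserving (⇑Λ)

/-- Schmidt rank of a bipartite vector: the minimal number of product terms in a
decomposition `ψ = Σ_t a_t ⊗ b_t`. -/
def SchmidtRank {dA dB : ℕ} (ψ : Fin dA × Fin dB → ℂ) : ℕ :=
  sInf {r : ℕ | ∃ (a : Fin r → Fin dA → ℂ) (b : Fin r → Fin dB → ℂ),
    ∀ i j, ψ (i, j) = ∑ t, a t i * b t j}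

/-- The Schmidt number of `ρ` is at most `k`: there is a pure-state decomposition
`ρ = Σ_i p_i |ψ_i⟩⟨ψ_i|` with all Schmidt ranks at most `k`. -/
def SchmidtNumberLE {dA dB : ℕ} (ρ : BMat dA dB) (k : ℕ) : Prop :=
  ∃ (n : ℕ) (p : Fin n → ℝ) (ψ : Fin n → (Fin dA × Fin dB → ℂ)),
    (∀ i, 0 ≤ p i) ∧ (∀ i, ∑ x, ‖ψ i x‖ ^ 2 = 1) ∧
    (∀ i, SchmidtRank (ψ i) ≤ k) ∧
    ρ = ∑ i, (p i : ℂ) • Matrix.vecMulVec (ψ i) (star (ψ i))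

/-- The (generalized) Schmidt-number robustness `R_{S_k}`. -/
noncomputable def robustness {dA dB : ℕ} (k : ℕ) (ρ : BMat dA dB) : ℝ :=
  sInf {R : ℝ | 0 ≤ R ∧ ∃ σ τ : BMat dA dB,
    IsState σ ∧ SchmidtNumberLE σ k ∧ IsState τ ∧
    ρ = ((1 + R : ℝ) : ℂ) • σ - (R : ℂ) • τ}

/-- Partial trace over the first tensor factor. -/
def ptraceFirst {dA dB : ℕ} (ρ : BMat dA dB) : Mat dB :=
  fun i j => ∑ a : Fin dA, ρ (a, i) (a, j)

/-- Partial trace over the second tensor factor. -/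
def ptraceSecond {dA dB : ℕ} (ρ : BMat dA dB) : Mat dA :=
  fun a b => ∑ i : Fin dB, ρ (a, i) (b, i)

/-- Embed a `BMat dA d` as the top-left block (in the second factor) of a `BMat dA (d+1)`. -/
def padSnd {dA d : ℕ} (M : BMat dA d) : BMat dA (d + 1) :=
  fun p q =>
    if h : (p.2 : ℕ) < d ∧ (q.2 : ℕ) < d then M (p.1, ⟨p.2, h.1⟩) (q.1, ⟨q.2, h.2⟩) else 0

/-- The shift unitary `X|n⟩ = |n+1 mod d⟩`. -/
def shiftMat (d : ℕ) : Mat d :=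
  fun i j => if (i : ℕ) = ((j : ℕ) + 1) % d then 1 else 0

/-- The clock unitary `Z|n⟩ = e^{2πin/d}|n⟩`. -/
def clockMat (d : ℕ) : Mat d :=
  fun i j => if i = j then Complex.exp (2 * Real.pi * Complex.I * (i : ℕ) / d) else 0

/-- The Heisenberg-Weyl unitary `X^k Z^l`. -/
def heisenbergU (d k l : ℕ) : Mat d := shiftMat d ^ k * clockMat d ^ l

/-- The maximally entangled unit vector `|φ⁺⟩ = (1/√d) Σ_n |n⟩ ⊗ |n⟩`. -/
def phiPlus (d : ℕ) : Fin d × Fin d → ℂ :=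
  fun p => if p.1 = p.2 then ((1 / Real.sqrt d : ℝ) : ℂ) else 0

/-- The projection `|φ⁺⟩⟨φ⁺|`. -/
def phiProj (d : ℕ) : BMat d d := Matrix.vecMulVec (phiPlus d) (star (phiPlus d))

/-- The Bell basis projection `M_{k,l} = (1 ⊗ X^k Z^l)|φ⁺⟩⟨φ⁺|(1 ⊗ X^k Z^l)ᴴ`. -/
def bellProj (d k l : ℕ) : BMat d d :=
  ((1 : Mat d) ⊗ₖ heisenbergU d k l) * phiProj d * ((1 : Mat d) ⊗ₖ heisenbergU d k l)ᴴ

/-- The canonical inclusion isometry `ℂ^d → ℂ^D`. -/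
def inclMat (d D : ℕ) : Matrix (Fin D) (Fin d) ℂ :=
  fun i j => if (i : ℕ) = (j : ℕ) then 1 else 0

/-- Optimal guessing probability for the discrimination of the (sub)channels `Λ i`
applied with a priori probabilities `p i`, using the input state `ρ`. -/
noncomputable def pguess {dA dB D N : ℕ} (p : Fin N → ℝ) (Λ : Fin N → (Mat dB → Mat D))
    (ρ : BMat dA dB) : ℝ :=
  sSup {x : ℝ | ∃ M : Fin N → Matrix (Fin dA × Fin D) (Fin dA × Fin D) ℂ,
    (∀ i, (M i).PosSemidef) ∧ (∑ i, M i) = 1 ∧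
    x = ∑ i, p i * ((M i * idTensor (Λ i) ρ).trace).re}

/-- Optimal guessing probability over all input states of Schmidt number at most `k`. -/
noncomputable def pguessK (dA : ℕ) {dB D N : ℕ} (k : ℕ) (p : Fin N → ℝ)
    (Λ : Fin N → (Mat dB → Mat D)) : ℝ :=
  sSup {x : ℝ | ∃ σ : BMat dA dB, IsState σ ∧ SchmidtNumberLE σ k ∧ x = pguess p Λ σ}

end


noncomputable section AuxStmt4

open Matrix

private lemma psd_sum {n ι : Type*} [Fintype n] [Fintype ι] (f : ι → Matrix n n ℂ)
    (hf : ∀ i, (f i).PosSemidef) : (∑ i, f i).PosSemidef :=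
  Finset.sum_induction f _ (fun _ _ ha hb => ha.add hb) Matrix.PosSemidef.zero
    (fun i _ => hf i)

private lemma cp_of_kraus {d d' : ℕ} (Θ : Mat d →ₗ[ℂ] Mat d')
    (K : (Fin d × Fin d') → Matrix (Fin d') (Fin d) ℂ)
    (hK : ∀ X : Mat d, Θ X = ∑ r, K r * X * (K r)ᴴ) : CompletelyPositive (⇑Θ) := by
  intro k ρ hρ
  have key : idTensor (⇑Θ) ρ =
      ∑ r, ((1 : Mat k) ⊗ₖ K r) * ρ * ((1 : Mat k) ⊗ₖ K r)ᴴ := by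
    funext p q
    obtain ⟨a, m⟩ := p
    obtain ⟨b, n⟩ := q
    show Θ (fun i j => ρ (a, i) (b, j)) m n = _
    rw [hK (fun i j => ρ (a, i) (b, j))]
    simp only [Matrix.sum_apply, Matrix.mul_apply, Matrix.conjTranspose_apply,
      Matrix.kroneckerMap_apply, Matrix.one_apply, Fintype.sum_prod_type,
      ite_mul, mul_ite, one_mul, zero_mul, mul_zero, apply_ite (star : ℂ → ℂ), star_zero,
      Finset.sum_ite_eq, Finset.mem_univ, if_true]
    refine Finset.sum_congr rfl fun r _ => ?_
    refine Finset.sum_congr rfl fun y _ => ?_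
    rw [Finset.sum_eq_single b (fun c _ hc => by simp [Ne.symm hc]) (by simp)]
    simp only [if_pos rfl]
    refine Finset.sum_congr rfl fun j _ => ?_
    congr 1
    rw [Finset.sum_eq_single a (fun c _ hc => by simp [Ne.symm hc]) (by simp)]
    simp
    rfl
  rw [key]
  exact psd_sum _ fun r => hρ.mul_mul_conjTranspose_same _

open scoped MatrixOrder in
private lemma cp_of_choi_psd {d d' : ℕ} (Θ : Mat d →ₗ[ℂ] Mat d')
    (h : (Matrix.of fun (p q : Fin d × Fin d') =>
        Θ (Matrix.single p.1 q.1 1) p.2 q.2).PosSemidef) :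
    CompletelyPositive (⇑Θ) := by
  obtain ⟨S, hS, -, hSS⟩ := CFC.exists_sqrt_of_isSelfAdjoint_of_quasispectrumRestricts
    h.isHermitian (QuasispectrumRestricts.nnreal_of_nonneg
      (Matrix.nonneg_iff_posSemidef.mpr h))
  have hsqrtH : Sᴴ = S := hS.star_eq
  have hC : S * Sᴴ = Matrix.of fun (p q : Fin d × Fin d') =>
      Θ (Matrix.single p.1 q.1 1) p.2 q.2 := by rw [hsqrtH, hSS]
  refine cp_of_kraus Θ (fun r => Matrix.of fun m i => S (i, m) r) (fun X => ?_)
  have hX : X = ∑ i, ∑ j, (X i j) • Matrix.single i j (1 : ℂ) := by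
    conv_lhs => rw [Matrix.matrix_eq_sum_single X]
    simp [Matrix.smul_single]
  funext m n
  conv_lhs => rw [hX]
  simp only [map_sum, _root_.map_smul, Matrix.sum_apply, Matrix.smul_apply, smul_eq_mul]
  have key : ∀ i j, Θ (Matrix.single i j 1) m n
      = ∑ r, S (i, m) r * star (S (j, n) r) := by
    intro i j
    have := congrFun (congrFun hC (i, m)) (j, n)
    rw [Matrix.mul_apply] at this
    simp only [Matrix.conjTranspose_apply, Matrix.of_apply] at this ⊢
    rw [this]
  simp only [key, Matrix.sum_apply, Matrix.mul_apply, Matrix.conjTranspose_apply,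
    Matrix.of_apply, Finset.mul_sum, Finset.sum_mul]
  rw [Finset.sum_comm]
  conv_rhs => rw [Finset.sum_comm]
  refine Finset.sum_congr rfl fun y _ => ?_
  conv_rhs => rw [Finset.sum_comm]
  refine Finset.sum_congr rfl fun x _ => ?_
  refine Finset.sum_congr rfl fun r _ => ?_
  ring

private lemma psd_one_add {n : Type*} [Fintype n] [DecidableEq n] (H : Matrix n n ℂ)
    (hH : H.IsHermitian) (a c : ℝ) (hc : 0 ≤ c)
    (hb : c * (∑ p, ∑ q, ‖H p q‖) ≤ a) :
    (((a : ℂ) • 1 + (c : ℂ) • H) : Matrix n n ℂ).PosSemidef := by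
  have hHc : ∀ p q, (starRingEnd ℂ) (H p q) = H q p := by
    intro p q
    have := congrFun (congrFun hH.eq q) p
    simpa [Matrix.conjTranspose_apply] using this
  refine Matrix.PosSemidef.of_dotProduct_mulVec_nonneg ?_ ?_
  · show _ᴴ = _
    rw [Matrix.conjTranspose_add, Matrix.conjTranspose_smul, Matrix.conjTranspose_smul,
      hH.eq, Matrix.conjTranspose_one, Complex.star_def, Complex.conj_ofReal,
      Complex.conj_ofReal]
  · intro x
    have hmv : ((a : ℂ) • 1 + (c : ℂ) • H) *ᵥ x = (a : ℂ) • x + (c : ℂ) • (H *ᵥ x) := by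
      rw [Matrix.add_mulVec, Matrix.smul_mulVec, Matrix.smul_mulVec,
        Matrix.one_mulVec]
    rw [hmv, dotProduct_add, dotProduct_smul, dotProduct_smul, smul_eq_mul, smul_eq_mul]
    set N : ℂ := star x ⬝ᵥ x with hN
    set w : ℂ := star x ⬝ᵥ (H *ᵥ x) with hw
    set Nr : ℝ := ∑ i, Complex.normSq (x i) with hNr
    set S : ℝ := ∑ p, ∑ q, ‖H p q‖ with hS
    have hNre : N = ((Nr : ℝ) : ℂ) := by
      simp [hN, hNr, dotProduct, Complex.normSq_eq_conj_mul_self]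
    have hNr0 : 0 ≤ Nr := Finset.sum_nonneg fun i _ => Complex.normSq_nonneg _
    have hwconj : (starRingEnd ℂ) w = w := by
      rw [hw]
      simp only [dotProduct, Matrix.mulVec, Pi.star_apply, map_sum, _root_.map_mul,
        RCLike.star_def, Complex.conj_conj, hHc, Finset.mul_sum]
      rw [Finset.sum_comm]
      refine Finset.sum_congr rfl fun p _ => Finset.sum_congr rfl fun q _ => ?_
      ring
    have hwim : w.im = 0 := by
      have := congrArg Complex.im hwconj
      simp only [Complex.conj_im] at this
      linarith
    have habs : ‖w‖ ≤ S * Nr := by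
      have h1 : ‖w‖ ≤ ∑ p, ∑ q, ‖H p q‖ *
          (‖x p‖ * ‖x q‖) := by
        calc ‖w‖ ≤ ∑ p, ‖star (x p) * (H *ᵥ x) p‖ := by
              rw [hw]
              exact norm_sum_le _ _
          _ ≤ ∑ p, ∑ q, ‖H p q‖ * (‖x p‖ * ‖x q‖) := by
              refine Finset.sum_le_sum fun p _ => ?_
              rw [norm_mul]
              calc ‖star (x p)‖ * ‖(H *ᵥ x) p‖
                  ≤ ‖x p‖ * ∑ q, ‖H p q * x q‖ := by
                    rw [RCLike.star_def, Complex.norm_conj]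
                    exact mul_le_mul_of_nonneg_left (norm_sum_le _ _)
                      (norm_nonneg _)
                _ = ∑ q, ‖H p q‖ * (‖x p‖ * ‖x q‖) := by
                    rw [Finset.mul_sum]
                    refine Finset.sum_congr rfl fun q _ => ?_
                    rw [norm_mul]; ring
      refine h1.trans ?_
      rw [hS, Finset.sum_mul]
      refine Finset.sum_le_sum fun p _ => ?_
      rw [Finset.sum_mul]
      refine Finset.sum_le_sum fun q _ => ?_
      refine mul_le_mul_of_nonneg_left ?_ (norm_nonneg _)
      have hp : ‖x p‖ ^ 2 ≤ Nr := by
        rw [Complex.sq_norm]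
        exact Finset.single_le_sum (fun i _ => Complex.normSq_nonneg (x i))
          (Finset.mem_univ p)
      have hq : ‖x q‖ ^ 2 ≤ Nr := by
        rw [Complex.sq_norm]
        exact Finset.single_le_sum (fun i _ => Complex.normSq_nonneg (x i))
          (Finset.mem_univ q)
      nlinarith [norm_nonneg (x p), norm_nonneg (x q),
        sq_nonneg (‖x p‖ - ‖x q‖)]
    have hwre : -(S * Nr) ≤ w.re := by
      have h2 : |w.re| ≤ ‖w‖ := Complex.abs_re_le_norm w
      have := neg_abs_le w.re
      linarith
    rw [Complex.le_def]
    constructor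
    · simp only [Complex.zero_re, Complex.add_re, Complex.mul_re, Complex.ofReal_re,
        Complex.ofReal_im, hNre, hwim, zero_mul, sub_zero, mul_zero]
      have hS0 : 0 ≤ S := Finset.sum_nonneg fun p _ =>
        Finset.sum_nonneg fun q _ => norm_nonneg _
      nlinarith [mul_le_mul_of_nonneg_left hwre hc, mul_nonneg (sub_nonneg.mpr hb) hNr0]
    · simp [hNre, hwim, Complex.add_im, Complex.mul_im, Complex.ofReal_im, Complex.ofReal_re]

end AuxStmt4

/-- every nonzero Hermiticity-preserving trace-annihilating map is
proportional to a difference of two quantum channels. -/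
theorem stmt4 {d d' : ℕ} (Λ : Mat d →ₗ[ℂ] Mat d') (hΛ : Λ ≠ 0)
    (hherm : ∀ X : Mat d, Λ Xᴴ = (Λ X)ᴴ) (hTA : ∀ X : Mat d, (Λ X).trace = 0) :
    ∃ (Φ₁ Φ₂ : Mat d →ₗ[ℂ] Mat d') (c : ℝ),
      IsChannel Φ₁ ∧ IsChannel Φ₂ ∧ 0 < c ∧ (c : ℂ) • Λ = Φ₁ - Φ₂ := by
  rcases Nat.eq_zero_or_pos d' with hd' | hd'
  · exact absurd (LinearMap.ext fun X => Matrix.ext fun m _ => absurd m.isLt (by omega)) hΛ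
  -- basic facts
  have hd'R : (0 : ℝ) < (d' : ℝ) := by exact_mod_cast hd'
  have hd'C : (d' : ℂ) ≠ 0 := by exact_mod_cast hd'.ne'
  have hstd : ∀ i j : Fin d, (Matrix.single i j (1 : ℂ))ᴴ
      = Matrix.single j i (1 : ℂ) := by
    intro i j
    funext a b
    simp only [Matrix.conjTranspose_apply, Matrix.single, Matrix.of_apply]
    by_cases h : j = a ∧ i = b
    · simp [h.1, h.2, and_comm]
    · rw [if_neg h, if_neg (by tauto), star_zero]
  have htr : ∀ i j : Fin d, (Matrix.single i j (1 : ℂ)).trace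
      = if i = j then 1 else 0 := by
    intro i j
    by_cases h : i = j
    · subst h; simp [Matrix.trace_single_eq_same]
    · rw [if_neg h, Matrix.trace_single_eq_of_ne i j (1 : ℂ) h]
  -- Choi matrix of Λ
  set H : BMat d d' :=
    Matrix.of (fun p q => Λ (Matrix.single p.1 q.1 1) p.2 q.2) with hHdef
  have hHherm : H.IsHermitian := by
    funext p q
    obtain ⟨i, m⟩ := p
    obtain ⟨j, n⟩ := q
    show star (H (j, n) (i, m)) = H (i, m) (j, n)
    have h1 : Λ (Matrix.single j i (1 : ℂ)) = (Λ (Matrix.single i j 1))ᴴ := by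
      rw [← hstd i j, hherm]
    show star (Λ (Matrix.single j i 1) n m) = Λ (Matrix.single i j 1) m n
    rw [h1]
    simp [Matrix.conjTranspose_apply]
  set C : ℝ := ∑ p, ∑ q, ‖H p q‖ with hCdef
  have hC0 : 0 ≤ C :=
    Finset.sum_nonneg fun p _ => Finset.sum_nonneg fun q _ => norm_nonneg _
  set c : ℝ := ((d' : ℝ) * (C + 1))⁻¹ with hcdef
  have hc : 0 < c := by positivity
  have hbound : c * C ≤ (d' : ℝ)⁻¹ := by
    have h1 : c * C = C / ((d' : ℝ) * (C + 1)) := by rw [div_eq_mul_inv]; ring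
    rw [h1, inv_eq_one_div, div_le_div_iff₀ (by positivity) hd'R]
    nlinarith
  -- the depolarizing channel
  set depL : Mat d →ₗ[ℂ] Mat d' :=
    (Matrix.traceLinearMap (Fin d) ℂ ℂ).smulRight ((d' : ℂ)⁻¹ • (1 : Mat d')) with hdepdef
  have hdep_apply : ∀ (X : Mat d) (m n : Fin d'),
      depL X m n = X.trace * ((d' : ℂ)⁻¹ * (1 : Mat d') m n) := by
    intro X m n
    simp [hdepdef, Matrix.smul_apply, smul_eq_mul, mul_assoc]
  set Φ₁ : Mat d →ₗ[ℂ] Mat d' := (c : ℂ) • Λ + depL with hΦ₁def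
  -- Choi matrices
  have hchoi2 : (Matrix.of fun (p q : Fin d × Fin d') =>
      depL (Matrix.single p.1 q.1 1) p.2 q.2)
      = (((d' : ℝ)⁻¹ : ℝ) : ℂ) • (1 : BMat d d') + ((0 : ℝ) : ℂ) • H := by
    funext p q
    obtain ⟨i, m⟩ := p
    obtain ⟨j, n⟩ := q
    simp only [Matrix.of_apply, Matrix.add_apply, Matrix.smul_apply, smul_eq_mul,
      Complex.ofReal_zero, zero_mul, add_zero, Complex.ofReal_inv, Complex.ofReal_natCast]
    rw [hdep_apply, htr]
    simp only [Matrix.one_apply, Prod.mk.injEq]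
    by_cases h1 : i = j <;> by_cases h2 : m = n <;>
      simp [h1, h2]
  have hchoi1 : (Matrix.of fun (p q : Fin d × Fin d') =>
      Φ₁ (Matrix.single p.1 q.1 1) p.2 q.2)
      = (((d' : ℝ)⁻¹ : ℝ) : ℂ) • (1 : BMat d d') + ((c : ℝ) : ℂ) • H := by
    funext p q
    obtain ⟨i, m⟩ := p
    obtain ⟨j, n⟩ := q
    have h2 := congrFun (congrFun hchoi2 (i, m)) (j, n)
    simp only [Matrix.of_apply] at h2
    simp only [hΦ₁def, LinearMap.add_apply, LinearMap.smul_apply, Matrix.of_apply,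
      Matrix.add_apply, Matrix.smul_apply, smul_eq_mul] at h2 ⊢
    rw [h2]
    have : H (i, m) (j, n) = Λ (Matrix.single i j 1) m n := rfl
    rw [← this]
    push_cast
    ring
  -- complete positivity
  have hpsd1 : (Matrix.of fun (p q : Fin d × Fin d') =>
      Φ₁ (Matrix.single p.1 q.1 1) p.2 q.2).PosSemidef := by
    rw [hchoi1]
    exact psd_one_add H hHherm _ c hc.le (by rw [← hCdef]; exact hbound)
  have hpsd2 : (Matrix.of fun (p q : Fin d × Fin d') =>
      depL (Matrix.single p.1 q.1 1) p.2 q.2).PosSemidef := by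
    rw [hchoi2]
    exact psd_one_add H hHherm _ 0 le_rfl (by rw [← hCdef]; simp [le_of_lt (inv_pos.mpr hd'R)])
  have hCP1 : CompletelyPositive (⇑Φ₁) := cp_of_choi_psd Φ₁ hpsd1
  have hCP2 : CompletelyPositive (⇑depL) := cp_of_choi_psd depL hpsd2
  -- trace preservation
  have htrdep : ∀ X : Mat d, (depL X).trace = X.trace := by
    intro X
    simp only [hdepdef, LinearMap.smulRight_apply, Matrix.traceLinearMap_apply,
      Matrix.trace_smul, smul_eq_mul, Matrix.trace_one]
    field_simp
    rw [Fintype.card_fin]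
  have hTP1 : TracePreserving (⇑Φ₁) := by
    intro X
    simp only [hΦ₁def, LinearMap.add_apply, LinearMap.smul_apply, Matrix.trace_add,
      Matrix.trace_smul, hTA, smul_eq_mul, mul_zero, zero_add]
    exact htrdep X
  refine ⟨Φ₁, depL, c, ⟨hCP1, hTP1⟩, ⟨hCP2, htrdep⟩, hc, ?_⟩
  rw [hΦ₁def]
  abel
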